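/- The projective Weyl tensor W of Θ_{A,B,C,D,E} on ℂ³ vanishes identically if and only if C = D. (In particular, for C ≠ D the translation-invariant holomorphic affine connection ∇^{A,B,C,D,E} on a complex 3-torus is not projectively flat, so the generic translation-invariant holomorphic affine connection on a complex 3-torus is not projectively flat.) -/
import Mathlib


noncomputable section
set_option maxHeartbeats 2000000

/-- `ℂ³`. -/
abbrev V3 : Type := Fin 3 → ℂ

/-- The standard basis of `ℂ³`: `e 0 = e₁ = ∂/∂z₁`, `e 1 = e₂ = ∂/∂z₂`, `e 2 = e₃ = ∂/∂τ`. -/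
def e (i : Fin 3) : V3 := Pi.single i 1

/-- The curvature tensor `R(X,Y)Z = Θ(X,Θ(Y,Z)) − Θ(Y,Θ(X,Z))`. -/
def curv (Θ : V3 →ₗ[ℂ] V3 →ₗ[ℂ] V3) (X Y Z : V3) : V3 :=
  Θ X (Θ Y Z) - Θ Y (Θ X Z)

/-- `TrR(X,Y) = tr (Z ↦ R(X,Y)Z)`. -/
def trR (Θ : V3 →ₗ[ℂ] V3 →ₗ[ℂ] V3) (X Y : V3) : ℂ :=
  LinearMap.trace ℂ V3 ((Θ X) ∘ₗ (Θ Y) - (Θ Y) ∘ₗ (Θ X))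

/-- `Ricci(Y,Z) = tr (X ↦ R(X,Y)Z)`. -/
def ricci (Θ : V3 →ₗ[ℂ] V3 →ₗ[ℂ] V3) (Y Z : V3) : ℂ :=
  LinearMap.trace ℂ V3 (Θ.flip (Θ Y Z) - (Θ Y) ∘ₗ (Θ.flip Z))

/-- The projective Weyl tensor in dimension three. -/
def weyl (Θ : V3 →ₗ[ℂ] V3 →ₗ[ℂ] V3) (X Y Z : V3) : V3 :=
  curv Θ X Y Z - ((1/4 : ℂ) * trR Θ X Y) • Z
    - (1/2 : ℂ) • (ricci Θ Y Z • X - ricci Θ X Z • Y)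
    - (1/8 : ℂ) • (trR Θ Y Z • X - trR Θ X Z • Y)

lemma texpand (x : V3) : x = x 0 • e 0 + x 1 • e 1 + x 2 • e 2 := by
  funext i; fin_cases i <;> simp [e]

lemma trace3 (f : V3 →ₗ[ℂ] V3) :
    LinearMap.trace ℂ V3 f = f (e 0) 0 + f (e 1) 1 + f (e 2) 2 := by
  rw [LinearMap.trace_eq_matrix_trace ℂ (Pi.basisFun ℂ (Fin 3)) f]
  simp [Matrix.trace, Fin.sum_univ_three, LinearMap.toMatrix_apply, e]

/-- The projective Weyl tensor of `Θ_{A,B,C,D,E}` on `ℂ³` vanishes identically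
if and only if `C = D`. -/
theorem stmt_9 (A B C D E : ℂ)
    (Θ : V3 →ₗ[ℂ] V3 →ₗ[ℂ] V3)
    (hsymm : ∀ x y : V3, Θ x y = Θ y x)
    (h11 : Θ (e 0) (e 0) = C • e 0)
    (h22 : Θ (e 1) (e 1) = D • e 1)
    (h33 : Θ (e 2) (e 2) = A • e 0 + B • e 1 + E • e 2)
    (h12 : Θ (e 0) (e 1) = (C/2) • e 0 + (D/2) • e 1)
    (h13 : Θ (e 0) (e 2) = (E/2) • e 0 + (C/2) • e 2)
    (h23 : Θ (e 1) (e 2) = (E/2) • e 1 + (D/2) • e 2)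
    :
    (∀ X Y Z : V3, weyl Θ X Y Z = 0) ↔ C = D := by
  have h21 : Θ (e 1) (e 0) = (C/2) • e 0 + (D/2) • e 1 := by rw [hsymm]; exact h12
  have h31 : Θ (e 2) (e 0) = (E/2) • e 0 + (C/2) • e 2 := by rw [hsymm]; exact h13
  have h32 : Θ (e 2) (e 1) = (E/2) • e 1 + (D/2) • e 2 := by rw [hsymm]; exact h23
  have hΘ : ∀ x y : V3, Θ x y =
      (C*(x 0*y 0) + C/2*(x 0*y 1) + C/2*(x 1*y 0) + E/2*(x 0*y 2) + E/2*(x 2*y 0) + A*(x 2*y 2)) • e 0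
      + (D*(x 1*y 1) + D/2*(x 0*y 1) + D/2*(x 1*y 0) + E/2*(x 1*y 2) + E/2*(x 2*y 1) + B*(x 2*y 2)) • e 1
      + (E*(x 2*y 2) + C/2*(x 0*y 2) + C/2*(x 2*y 0) + D/2*(x 1*y 2) + D/2*(x 2*y 1)) • e 2 := by
    intro x y
    conv_lhs => rw [texpand x, texpand y]
    simp only [map_add, map_smul, LinearMap.add_apply, LinearMap.smul_apply,
      h11, h22, h33, h12, h13, h23, h21, h31, h32, smul_add, smul_smul]
    module
  have hk0 : ∀ x y : V3, Θ x y 0 =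
      C*(x 0*y 0) + C/2*(x 0*y 1) + C/2*(x 1*y 0) + E/2*(x 0*y 2) + E/2*(x 2*y 0) + A*(x 2*y 2) := by
    intro x y; rw [hΘ]; simp [e]
  have hk1 : ∀ x y : V3, Θ x y 1 =
      D*(x 1*y 1) + D/2*(x 0*y 1) + D/2*(x 1*y 0) + E/2*(x 1*y 2) + E/2*(x 2*y 1) + B*(x 2*y 2) := by
    intro x y; rw [hΘ]; simp [e]
  have hk2 : ∀ x y : V3, Θ x y 2 =
      E*(x 2*y 2) + C/2*(x 0*y 2) + C/2*(x 2*y 0) + D/2*(x 1*y 2) + D/2*(x 2*y 1) := by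
    intro x y; rw [hΘ]; simp [e]
  have he0 : (e 0 0 : ℂ) = 1 ∧ (e 0 1 : ℂ) = 0 ∧ (e 0 2 : ℂ) = 0 ∧ (e 1 0 : ℂ) = 0 ∧
      (e 1 1 : ℂ) = 1 ∧ (e 1 2 : ℂ) = 0 ∧ (e 2 0 : ℂ) = 0 ∧ (e 2 1 : ℂ) = 0 ∧ (e 2 2 : ℂ) = 1 := by
    refine ⟨?_,?_,?_,?_,?_,?_,?_,?_,?_⟩ <;> simp [e]
  obtain ⟨q1,q2,q3,q4,q5,q6,q7,q8,q9⟩ := he0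
  constructor
  · intro h
    have h0 := congrFun (h (e 0) (e 1) (e 0)) 0
    simp only [weyl, curv, trR, ricci, trace3, LinearMap.sub_apply, LinearMap.comp_apply,
      LinearMap.flip_apply, Pi.add_apply, Pi.sub_apply, Pi.smul_apply, smul_eq_mul,
      mul_zero, zero_mul, mul_one, one_mul, add_zero, zero_add, sub_zero, Pi.zero_apply, hk0, hk1, hk2, q1,q2,q3,q4,q5,q6,q7,q8,q9] at h0
    have hsq : (C - D) ^ 2 = 0 := by linear_combination (-8 : ℂ) * h0
    have := pow_eq_zero_iff (n := 2) (by norm_num) |>.mp hsq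
    exact sub_eq_zero.mp this
  · intro h
    subst h
    intro X Y Z
    funext k
    have h3 : ∀ j : Fin 3, j = 0 ∨ j = 1 ∨ j = 2 := by decide
    rcases h3 k with rfl | rfl | rfl <;>
    · simp only [weyl, curv, trR, ricci, trace3, LinearMap.sub_apply, LinearMap.comp_apply,
        LinearMap.flip_apply, Pi.add_apply, Pi.sub_apply, Pi.smul_apply, smul_eq_mul,
        mul_zero, zero_mul, mul_one, one_mul, add_zero, zero_add, sub_zero, Pi.zero_apply, Fin.isValue, hk0, hk1, hk2, q1,q2,q3,q4,q5,q6,q7,q8,q9]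
      ring
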